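/- Consider the linear program over matrices M ∈ ℝ^{d×d}: M_{xx} ≥ c for all x, M_{xy} ≤ c for x ≠ y, and Σ_x q_x M_{x x'} ≤ 0 for all x', where q is a probability vector with max_x q_x < 1 and c > 0. Then the minimum of the objective Σ_x q_x M_{xx} over feasible M equals c, and at any optimal solution the constraint M_{xx} ≥ c is binding (M_{xx} = c) for every x with q_x > 0. -/

import Mathlib

open BigOperators

/-- The optimal value of the two-agent peer-prediction LP over matrices `M`
(individual rationality `M x x ≥ c`, truthfulness `M x y ≤ c` for `x ≠ y`,
no-free-lunch `∑ x, q x * M x x' ≤ 0`) with objective `∑ x, q x * M x x`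
equals `c`, and at any optimum the IR constraint is binding wherever `q x > 0`. -/
theorem stmt1 (d : ℕ) (hd : 0 < d) (q : Fin d → ℝ) (c : ℝ) (hc : 0 < c)
    (hq_nonneg : ∀ x, 0 ≤ q x) (hq_sum : ∑ x, q x = 1) (hq_lt : ∀ x, q x < 1) :
    IsLeast
      {v : ℝ | ∃ M : Matrix (Fin d) (Fin d) ℝ,
        (∀ x, c ≤ M x x) ∧
        (∀ x y, x ≠ y → M x y ≤ c) ∧
        (∀ x', ∑ x, q x * M x x' ≤ 0) ∧
        v = ∑ x, q x * M x x} c ∧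
    (∀ M : Matrix (Fin d) (Fin d) ℝ,
      (∀ x, c ≤ M x x) →
      (∀ x y, x ≠ y → M x y ≤ c) →
      (∀ x', ∑ x, q x * M x x' ≤ 0) →
      (∑ x, q x * M x x) = c →
      ∀ x, 0 < q x → M x x = c) := by
  have hbind : ∀ M : Matrix (Fin d) (Fin d) ℝ,
      (∀ x, c ≤ M x x) →
      (∑ x, q x * M x x) = c →
      ∀ x, 0 < q x → M x x = c := by
    intro M hIR hopt x hx
    have hz : ∑ y, q y * (M y y - c) = 0 := by
      have : ∑ y, q y * (M y y - c) = (∑ y, q y * M y y) - (∑ y, q y) * c := by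
        rw [Finset.sum_mul, ← Finset.sum_sub_distrib]
        ring_nf
        exact Finset.sum_congr rfl fun y _ => by ring
      rw [this, hopt, hq_sum, one_mul, sub_self]
    have hnn : ∀ y ∈ Finset.univ, 0 ≤ q y * (M y y - c) := fun y _ =>
      mul_nonneg (hq_nonneg y) (sub_nonneg.mpr (hIR y))
    have := (Finset.sum_eq_zero_iff_of_nonneg hnn).mp hz x (Finset.mem_univ x)
    rcases mul_eq_zero.mp this with h | h
    · exact absurd h (ne_of_gt hx)
    · linarith [sub_eq_zero.mp h]
  constructor
  · constructor
    · refine ⟨fun x y => if x = y then c else -c * q y / (1 - q y), fun x => ?_,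
        fun x y hxy => ?_, fun x' => ?_, ?_⟩
      · simp
      · simp only [if_neg hxy]
        have h1 : 0 < 1 - q y := by linarith [hq_lt y]
        have : -c * q y / (1 - q y) ≤ 0 := by
          apply div_nonpos_of_nonpos_of_nonneg
          · nlinarith [hq_nonneg y]
          · linarith
        linarith
      · have h1 : 0 < 1 - q x' := by linarith [hq_lt x']
        have hsplit : ∑ x, q x * (if x = x' then c else -c * q x' / (1 - q x'))
            = q x' * c + (∑ x ∈ Finset.univ.erase x', q x) * (-c * q x' / (1 - q x')) := by
          rw [← Finset.add_sum_erase _ _ (Finset.mem_univ x'), if_pos rfl, Finset.sum_mul]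
          congr 1
          apply Finset.sum_congr rfl
          intro x hx
          rw [if_neg (Finset.ne_of_mem_erase hx)]
        have herase : ∑ x ∈ Finset.univ.erase x', q x = 1 - q x' := by
          rw [Finset.sum_erase_eq_sub (Finset.mem_univ x'), hq_sum]
        rw [hsplit, herase]
        have h2 : (1 - q x') * (-c * q x' / (1 - q x')) = -c * q x' := by
          field_simp
        rw [h2]; nlinarith
      · simp only [if_pos rfl, if_true]
        rw [← Finset.sum_mul, hq_sum, one_mul]
    · rintro v ⟨M, hIR, _, _, rfl⟩
      calc c = ∑ x, q x * c := by rw [← Finset.sum_mul, hq_sum, one_mul]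
        _ ≤ ∑ x, q x * M x x := Finset.sum_le_sum fun x _ =>
            mul_le_mul_of_nonneg_left (hIR x) (hq_nonneg x)
  · intro M hIR _ _ hopt
    exact hbind M hIR hopt
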